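/- Explicit formula for the level-0 stationary vector: if the (ℓ+1)×(ℓ+1) matrix S δ_0 − B^0 is invertible (here S δ_0 is the matrix whose column 0 equals the column vector S and whose other columns are zero), then π^0 = δ_0 (S δ_0 − B^0)^{−1}. -/

import Mathlib

open Matrix

lemma sum_if_fin (c : ℕ) {N : ℕ} (f : Fin (N+1) → ℝ) :
    (∑ m : Fin (N+1), if m.val = c then f m else 0)
      = if h : c ≤ N then f ⟨c, by omega⟩ else 0 := by
  split_ifs with h
  · rw [Finset.sum_eq_single (⟨c, by omega⟩ : Fin (N+1))]
    · simp
    · intro b _ hb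
      rw [if_neg]
      intro hbc
      exact hb (by ext; simpa using hbc)
    · simp
  · refine Finset.sum_eq_zero fun m _ => ?_
    rw [if_neg]
    have := m.isLt
    omega

theorem stmt_7
    (M l : ℕ) (hM : 1 ≤ M)
    (Q : Matrix (Fin (M+1) × Fin (l+1)) (Fin (M+1) × Fin (l+1)) ℝ)
    (htri : ∀ (m n : Fin (M+1)) (i j : Fin (l+1)),
      1 < |(m.val : ℤ) - (n.val : ℤ)| → Q (m, i) (n, j) = 0)
    (hrow : ∀ s, ∑ t, Q s t = 0)
    (W U D : ℕ → Matrix (Fin (l+1)) (Fin (l+1)) ℝ)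
    (hW : ∀ (m : ℕ) (hm : m ≤ M) (i j : Fin (l+1)),
      W m i j = Q (⟨m, by omega⟩, i) (⟨m, by omega⟩, j))
    (hU : ∀ (m : ℕ) (hm : m < M) (i j : Fin (l+1)),
      U m i j = Q (⟨m, by omega⟩, i) (⟨m+1, by omega⟩, j))
    (hD : ∀ (m : ℕ) (hm1 : 1 ≤ m) (hm2 : m ≤ M) (i j : Fin (l+1)),
      D m i j = Q (⟨m, by omega⟩, i) (⟨m-1, by omega⟩, j))
    (hDES : ∀ (m : ℕ), 1 ≤ m → m ≤ M → ∀ (i j : Fin (l+1)), j ≠ 0 → D m i j = 0)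
    (Ut : ℕ → Matrix (Fin (l+1)) (Fin (l+1)) ℝ)
    (hUt : ∀ (m : ℕ), m < M → ∀ (i j : Fin (l+1)),
      Ut m i j = if j = 0 then ∑ k, U m i k else 0)
    (hUtM : Ut M = 0)
    (B : ℕ → Matrix (Fin (l+1)) (Fin (l+1)) ℝ)
    (hB : ∀ (m : ℕ), m ≤ M → B m = W m + Ut m)
    (π : Fin (M+1) × Fin (l+1) → ℝ)
    (hπ : Matrix.vecMul π Q = 0)
    (hBinv : ∀ (m : ℕ), 1 ≤ m → m ≤ M → IsUnit (B m))
    (R : ℕ → Matrix (Fin (l+1)) (Fin (l+1)) ℝ)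
    (hR : ∀ (m : ℕ), 1 ≤ m → m ≤ M → R m = -(U (m-1) * (B m)⁻¹))
    (S : Fin (l+1) → ℝ)
    (hS : ∀ i, S i = 1 + ∑ m ∈ Finset.Icc 1 M, ∑ j, (((List.range' 1 m).map R).prod) i j)
    (hnorm : ∑ s, π s = 1)
    (hinv : IsUnit (Matrix.vecMulVec S (fun j => if j = (0 : Fin (l+1)) then (1:ℝ) else 0) - B 0)) :
    (fun i => π ((0 : Fin (M+1)), i))
      = Matrix.vecMul (fun j => if j = (0 : Fin (l+1)) then (1:ℝ) else 0)
          (Matrix.vecMulVec S (fun j => if j = (0 : Fin (l+1)) then (1:ℝ) else 0) - B 0)⁻¹ := by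
  set δ0 : Fin (l+1) → ℝ := fun j => if j = (0 : Fin (l+1)) then (1:ℝ) else 0 with hδ0
  set E : Matrix (Fin (l+1)) (Fin (l+1)) ℝ :=
    Matrix.of (fun _ j => if j = (0 : Fin (l+1)) then (1:ℝ) else 0) with hEdef
  set p : ℕ → Fin (l+1) → ℝ :=
    fun m i => if h : m ≤ M then π (⟨m, by omega⟩, i) else 0 with hpdef
  have hpm : ∀ (m : ℕ) (hm : m ≤ M) (i : Fin (l+1)), p m i = π (⟨m, by omega⟩, i) := by
    intro m hm i
    simp [hpdef, hm]
  -- balance equations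
  have bal : ∀ (n : ℕ), n ≤ M → ∀ (j : Fin (l+1)),
      (if 1 ≤ n then ∑ i, p (n-1) i * U (n-1) i j else 0)
      + (∑ i, p n i * W n i j)
      + (if n < M then ∑ i, p (n+1) i * D (n+1) i j else 0) = 0 := by
    intro n hn j
    have h0 := congrFun hπ (⟨n, by omega⟩, j)
    simp only [Matrix.vecMul, dotProduct, Pi.zero_apply] at h0
    rw [Fintype.sum_prod_type, Finset.sum_comm] at h0
    have hin : ∀ i : Fin (l+1),
        (∑ m : Fin (M+1), π (m, i) * Q (m, i) (⟨n, by omega⟩, j))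
        = (if 1 ≤ n then p (n-1) i * U (n-1) i j else 0)
          + p n i * W n i j
          + (if n < M then p (n+1) i * D (n+1) i j else 0) := by
      intro i
      have hsplit : ∀ m : Fin (M+1), π (m, i) * Q (m, i) (⟨n, by omega⟩, j)
          = (if m.val + 1 = n then π (m, i) * Q (m, i) (⟨n, by omega⟩, j) else 0)
          + (if m.val = n then π (m, i) * Q (m, i) (⟨n, by omega⟩, j) else 0)
          + (if m.val = n + 1 then π (m, i) * Q (m, i) (⟨n, by omega⟩, j) else 0) := by
        intro m
        by_cases h1 : m.val + 1 = n
        · rw [if_pos h1, if_neg (by omega), if_neg (by omega)]; ring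
        · by_cases h2 : m.val = n
          · rw [if_neg h1, if_pos h2, if_neg (by omega)]; ring
          · by_cases h3 : m.val = n + 1
            · rw [if_neg h1, if_neg h2, if_pos h3]; ring
            · have hz : Q (m, i) (⟨n, by omega⟩, j) = 0 := by
                apply htri
                simp only [Fin.val_mk]
                rw [lt_abs]
                omega
              rw [if_neg h1, if_neg h2, if_neg h3, hz]; ring
      rw [Finset.sum_congr rfl fun m _ => hsplit m, Finset.sum_add_distrib,
        Finset.sum_add_distrib]
      congr 1
      · congr 1
        · -- term n-1 : the U term
          by_cases h1n : 1 ≤ n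
          · obtain ⟨k, rfl⟩ : ∃ k, n = k + 1 := ⟨n - 1, by omega⟩
            simp only [Nat.add_sub_cancel]
            have hcond : ∀ m : Fin (M+1), (m.val + 1 = k + 1) = (m.val = k) := by
              intro m; apply propext; omega
            simp only [hcond]
            rw [sum_if_fin k (fun m => π (m, i) * Q (m, i) (⟨k + 1, by omega⟩, j)),
              dif_pos (by omega : k ≤ M), if_pos h1n,
              hpm k (by omega) i, hU k (by omega) i j]
          · rw [if_neg h1n]
            refine Finset.sum_eq_zero fun m _ => ?_
            rw [if_neg (by omega)]
        · -- term n : the W term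
          rw [sum_if_fin n (fun m => π (m, i) * Q (m, i) (⟨n, by omega⟩, j)), dif_pos hn]
          rw [hpm n hn i, hW n hn i j]
      · -- term n+1 : the D term
        rw [sum_if_fin (n+1) (fun m => π (m, i) * Q (m, i) (⟨n, by omega⟩, j))]
        by_cases hnM : n < M
        · rw [dif_pos (by omega : n + 1 ≤ M), if_pos hnM]
          rw [hpm (n+1) (by omega) i, hD (n+1) (by omega) (by omega) i j]
          simp only [Nat.add_sub_cancel]
        · rw [dif_neg (by omega), if_neg hnM]
    rw [Finset.sum_congr rfl fun i _ => hin i, Finset.sum_add_distrib,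
      Finset.sum_add_distrib] at h0
    by_cases hc1 : 1 ≤ n <;> by_cases hc2 : n < M <;>
      simp only [hc1, hc2, if_true, if_false, Finset.sum_const_zero] at h0 ⊢ <;>
      linarith
  -- row sums
  have rowbal : ∀ (m : ℕ), m ≤ M → ∀ i : Fin (l+1),
      (if 1 ≤ m then ∑ j, D m i j else 0)
      + (∑ j, W m i j)
      + (if m < M then ∑ j, U m i j else 0) = 0 := by
    intro m hm i
    have h0 := hrow (⟨m, by omega⟩, i)
    rw [Fintype.sum_prod_type] at h0
    have hin : ∀ n : Fin (M+1),
        (∑ j, Q (⟨m, by omega⟩, i) (n, j))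
        = (if n.val + 1 = m then ∑ j, Q (⟨m, by omega⟩, i) (n, j) else 0)
          + (if n.val = m then ∑ j, Q (⟨m, by omega⟩, i) (n, j) else 0)
          + (if n.val = m + 1 then ∑ j, Q (⟨m, by omega⟩, i) (n, j) else 0) := by
      intro n
      by_cases h1 : n.val + 1 = m
      · rw [if_pos h1, if_neg (by omega), if_neg (by omega)]; ring
      · by_cases h2 : n.val = m
        · rw [if_neg h1, if_pos h2, if_neg (by omega)]; ring
        · by_cases h3 : n.val = m + 1
          · rw [if_neg h1, if_neg h2, if_pos h3]; ring
          · have hz : ∀ j, Q (⟨m, by omega⟩, i) (n, j) = 0 := by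
              intro j
              apply htri
              simp only [Fin.val_mk]
              rw [lt_abs]
              omega
            rw [if_neg h1, if_neg h2, if_neg h3]
            simp [hz]
    rw [Finset.sum_congr rfl fun n _ => hin n, Finset.sum_add_distrib,
      Finset.sum_add_distrib] at h0
    have e1 : (∑ n : Fin (M+1), if n.val + 1 = m then ∑ j, Q (⟨m, by omega⟩, i) (n, j) else 0)
        = (if 1 ≤ m then ∑ j, D m i j else 0) := by
      by_cases h1m : 1 ≤ m
      · obtain ⟨k, rfl⟩ : ∃ k, m = k + 1 := ⟨m - 1, by omega⟩
        have hcond : ∀ n : Fin (M+1), (n.val + 1 = k + 1) = (n.val = k) := by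
          intro n; apply propext; omega
        simp only [hcond]
        rw [sum_if_fin k (fun n => ∑ j, Q (⟨k + 1, by omega⟩, i) (n, j)),
          dif_pos (by omega : k ≤ M), if_pos h1m]
        refine Finset.sum_congr rfl fun j _ => ?_
        rw [hD (k+1) (by omega) (by omega) i j]
        simp only [Nat.add_sub_cancel]
      · rw [if_neg h1m]
        refine Finset.sum_eq_zero fun n _ => ?_
        rw [if_neg (by omega)]
    have e2 : (∑ n : Fin (M+1), if n.val = m then ∑ j, Q (⟨m, by omega⟩, i) (n, j) else 0)
        = ∑ j, W m i j := by
      rw [sum_if_fin m (fun n => ∑ j, Q (⟨m, by omega⟩, i) (n, j)), dif_pos hm]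
      exact Finset.sum_congr rfl fun j _ => (hW m hm i j).symm
    have e3 : (∑ n : Fin (M+1), if n.val = m + 1 then ∑ j, Q (⟨m, by omega⟩, i) (n, j) else 0)
        = (if m < M then ∑ j, U m i j else 0) := by
      rw [sum_if_fin (m+1) (fun n => ∑ j, Q (⟨m, by omega⟩, i) (n, j))]
      by_cases hmM : m < M
      · rw [dif_pos (by omega : m + 1 ≤ M), if_pos hmM]
        exact Finset.sum_congr rfl fun j _ => (hU m hmM i j).symm
      · rw [dif_neg (by omega), if_neg hmM]
    rw [e1, e2, e3] at h0
    exact h0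
  -- sum of D row equals minus sum of B row
  have hsumB : ∀ m, 1 ≤ m → m ≤ M → ∀ i, (∑ k, D m i k) = - ∑ k, B m i k := by
    intro m h1 h2 i
    have h0 := rowbal m h2 i
    rw [if_pos h1] at h0
    have hBsum : (∑ k, B m i k) = (∑ k, W m i k) + (if m < M then ∑ k, U m i k else 0) := by
      rw [hB m h2]
      simp only [Matrix.add_apply, Finset.sum_add_distrib]
      congr 1
      by_cases hmM : m < M
      · rw [if_pos hmM, Finset.sum_congr rfl fun k _ => hUt m hmM i k]
        simp
      · rw [if_neg hmM]
        have hmm : m = M := by omega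
        subst hmm
        rw [hUtM]
        simp
    rw [hBsum]
    linarith
  -- D m = -(B m * E)
  have hDE : ∀ m, 1 ≤ m → m ≤ M → D m = -(B m * E) := by
    intro m h1 h2
    ext i j
    have hBE : (B m * E) i j = if j = 0 then ∑ k, B m i k else 0 := by
      rw [Matrix.mul_apply]
      by_cases hj : j = 0
      · simp [hEdef, hj]
      · simp [hEdef, hj]
    by_cases hj : j = 0
    · subst hj
      have hone : (∑ k, D m i k) = D m i 0 := by
        rw [Finset.sum_eq_single 0]
        · intro b _ hb
          exact hDES m h1 h2 i b hb
        · simp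
      rw [Matrix.neg_apply, hBE, if_pos rfl, ← hsumB m h1 h2 i, hone]
    · rw [hDES m h1 h2 i j hj, Matrix.neg_apply, hBE, if_neg hj, neg_zero]
  -- Ut m = U m * E
  have hUE : ∀ m, m < M → Ut m = U m * E := by
    intro m hm
    ext i j
    rw [Matrix.mul_apply, hUt m hm i j]
    by_cases hj : j = 0
    · simp [hEdef, hj]
    · simp [hEdef, hj]
  -- top-level equation
  have hCM : Matrix.vecMul (p (M-1)) (U (M-1)) + Matrix.vecMul (p M) (B M) = 0 := by
    funext j
    have h0 := bal M le_rfl j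
    rw [if_pos hM, if_neg (lt_irrefl M)] at h0
    have hBM : B M = W M := by rw [hB M le_rfl, hUtM, add_zero]
    simp only [Pi.add_apply, Pi.zero_apply, Matrix.vecMul, dotProduct, hBM]
    linarith
  -- downward induction
  have hC : ∀ (k m : ℕ), 1 ≤ m → m ≤ M → M - m ≤ k →
      Matrix.vecMul (p (m-1)) (U (m-1)) + Matrix.vecMul (p m) (B m) = 0 := by
    intro k
    induction k with
    | zero =>
      intro m h1 h2 h3
      have hmm : m = M := by omega
      subst hmm
      exact hCM
    | succ k ih =>
      intro m h1 h2 h3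
      by_cases hmM : m = M
      · subst hmM; exact hCM
      · have hmlt : m < M := by omega
        have hnext := ih (m+1) (by omega) (by omega) (by omega)
        simp only [Nat.add_sub_cancel] at hnext
        have heq : Matrix.vecMul (p (m+1)) (B (m+1)) = -(Matrix.vecMul (p m) (U m)) :=
          eq_neg_of_add_eq_zero_right hnext
        have hDst : Matrix.vecMul (p (m+1)) (D (m+1)) = Matrix.vecMul (p m) (Ut m) := by
          rw [hDE (m+1) (by omega) (by omega), Matrix.vecMul_neg, ← Matrix.vecMul_vecMul,
            heq, Matrix.neg_vecMul, neg_neg, Matrix.vecMul_vecMul, ← hUE m hmlt]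
        funext j
        have h0 := bal m h2 j
        rw [if_pos h1, if_pos hmlt] at h0
        have h3' : (∑ i, p (m+1) i * D (m+1) i j) = ∑ i, p m i * Ut m i j := by
          have := congrFun hDst j
          simpa [Matrix.vecMul, dotProduct] using this
        rw [h3'] at h0
        simp only [Pi.add_apply, Pi.zero_apply, Matrix.vecMul, dotProduct, hB m h2,
          Matrix.add_apply, mul_add, Finset.sum_add_distrib]
        linarith
  -- D step with full hC
  have hDstep : ∀ m : ℕ, m < M →
      Matrix.vecMul (p (m+1)) (D (m+1)) = Matrix.vecMul (p m) (Ut m) := by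
    intro m hm
    have hnext := hC M (m+1) (by omega) (by omega) (by omega)
    simp only [Nat.add_sub_cancel] at hnext
    have heq : Matrix.vecMul (p (m+1)) (B (m+1)) = -(Matrix.vecMul (p m) (U m)) :=
      eq_neg_of_add_eq_zero_right hnext
    rw [hDE (m+1) (by omega) (by omega), Matrix.vecMul_neg, ← Matrix.vecMul_vecMul,
      heq, Matrix.neg_vecMul, neg_neg, Matrix.vecMul_vecMul, ← hUE m hm]
  -- the R recursion
  have hCR : ∀ m, 1 ≤ m → m ≤ M → p m = Matrix.vecMul (p (m-1)) (R m) := by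
    intro m h1 h2
    have hdet : IsUnit (B m).det := (Matrix.isUnit_iff_isUnit_det _).mp (hBinv m h1 h2)
    have h0 : Matrix.vecMul (p m) (B m) = -(Matrix.vecMul (p (m-1)) (U (m-1))) :=
      eq_neg_of_add_eq_zero_right (hC M m h1 h2 (by omega))
    have hid : Matrix.vecMul (Matrix.vecMul (p m) (B m)) (B m)⁻¹ = p m := by
      rw [Matrix.vecMul_vecMul, Matrix.mul_nonsing_inv _ hdet, Matrix.vecMul_one]
    rw [← hid, h0, hR m h1 h2, Matrix.neg_vecMul, Matrix.vecMul_neg, Matrix.vecMul_vecMul]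
  -- level 0 equation
  have hE0 : Matrix.vecMul (p 0) (B 0) = 0 := by
    funext j
    have h0 := bal 0 (by omega) j
    rw [if_neg (by omega), if_pos (by omega : 0 < M)] at h0
    have h1 := congrFun (hDstep 0 (by omega)) j
    simp only [Matrix.vecMul, dotProduct] at h1
    rw [h1] at h0
    simp only [Pi.zero_apply, Matrix.vecMul, dotProduct, hB 0 (by omega),
      Matrix.add_apply, mul_add, Finset.sum_add_distrib]
    linarith
  -- products
  have hP : ∀ m, m ≤ M → p m = Matrix.vecMul (p 0) ((List.range' 1 m).map R).prod := by
    intro m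
    induction m with
    | zero =>
      intro _
      show p 0 = Matrix.vecMul (p 0) (1 : Matrix (Fin (l+1)) (Fin (l+1)) ℝ)
      rw [Matrix.vecMul_one]
    | succ m ih =>
      intro hm
      have h1 : ((List.range' 1 (m+1)).map R).prod
          = ((List.range' 1 m).map R).prod * R (m + 1) := by
        rw [List.range'_concat]
        simp [Nat.add_comm 1 m]
      rw [h1, ← Matrix.vecMul_vecMul, ← ih (by omega)]
      have hc := hCR (m+1) (by omega) hm
      simp only [Nat.add_sub_cancel] at hc
      exact hc
  -- normalization
  have hF : (∑ i, p 0 i * S i) = 1 := by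
    have hterm : ∀ m ∈ Finset.Icc 1 M,
        (∑ j, ∑ i, p 0 i * ((List.range' 1 m).map R).prod i j) = ∑ j, p m j := by
      intro m hm
      rw [Finset.mem_Icc] at hm
      refine Finset.sum_congr rfl fun j _ => ?_
      have hpj := congrFun (hP m hm.2) j
      simp only [Matrix.vecMul, dotProduct] at hpj
      exact hpj.symm
    have step1 : (∑ i, p 0 i * S i)
        = ∑ i, (p 0 i + ∑ m ∈ Finset.Icc 1 M,
            ∑ j, p 0 i * ((List.range' 1 m).map R).prod i j) := by
      refine Finset.sum_congr rfl fun i _ => ?_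
      rw [hS i, mul_add, mul_one, Finset.mul_sum]
      congr 1
      exact Finset.sum_congr rfl fun m _ => by rw [Finset.mul_sum]
    have step2 : (∑ i, (p 0 i + ∑ m ∈ Finset.Icc 1 M,
            ∑ j, p 0 i * ((List.range' 1 m).map R).prod i j))
        = (∑ i, p 0 i) + ∑ m ∈ Finset.Icc 1 M, ∑ j, p m j := by
      rw [Finset.sum_add_distrib]
      congr 1
      rw [Finset.sum_comm]
      refine Finset.sum_congr rfl fun m hm => ?_
      rw [Finset.sum_comm, hterm m hm]
    have hins : Finset.range (M+1) = insert 0 (Finset.Icc 1 M) := by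
      ext x
      simp only [Finset.mem_range, Finset.mem_insert, Finset.mem_Icc]
      omega
    have step3 : ((∑ i, p 0 i) + ∑ m ∈ Finset.Icc 1 M, ∑ j, p m j)
        = ∑ m ∈ Finset.range (M+1), ∑ j, p m j := by
      rw [hins, Finset.sum_insert (by simp)]
    have step4 : (∑ m ∈ Finset.range (M+1), ∑ j, p m j)
        = ∑ m : Fin (M+1), ∑ j, p m.val j :=
      (Fin.sum_univ_eq_sum_range (fun m => ∑ j, p m j) (M+1)).symm
    have step5 : (∑ m : Fin (M+1), ∑ j, p m.val j) = 1 := by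
      rw [← hnorm, Fintype.sum_prod_type]
      refine Finset.sum_congr rfl fun m _ => Finset.sum_congr rfl fun j _ => ?_
      rw [hpm m.val (by omega) j]
    rw [step1, step2, step3, step4, step5]
  -- final assembly
  have hfin : Matrix.vecMul (p 0) (Matrix.vecMulVec S δ0 - B 0) = δ0 := by
    rw [Matrix.vecMul_sub, hE0, sub_zero]
    funext j
    simp only [Matrix.vecMul, dotProduct, Matrix.vecMulVec_apply]
    have : (∑ i, p 0 i * (S i * δ0 j)) = (∑ i, p 0 i * S i) * δ0 j := by
      rw [Finset.sum_mul]
      exact Finset.sum_congr rfl fun i _ => by ring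
    rw [this, hF, one_mul]
  have hdetA : IsUnit (Matrix.vecMulVec S δ0 - B 0).det :=
    (Matrix.isUnit_iff_isUnit_det _).mp hinv
  have hlast : p 0 = Matrix.vecMul δ0 (Matrix.vecMulVec S δ0 - B 0)⁻¹ := by
    have hid : Matrix.vecMul (Matrix.vecMul (p 0) (Matrix.vecMulVec S δ0 - B 0))
        (Matrix.vecMulVec S δ0 - B 0)⁻¹ = p 0 := by
      rw [Matrix.vecMul_vecMul, Matrix.mul_nonsing_inv _ hdetA, Matrix.vecMul_one]
    rw [← hid, hfin]
  rw [← hlast]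
  funext i
  rw [hpm 0 (by omega) i]
  congr 1
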